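/- Fix real constants m₀ > 0, ω > 0, ħ > 0, a > -1, set λ₀ = √(m₀ω/ħ) and ξ(x) = λ₀^{a+1}·(a+1)^{-1/2}·|x|^a·x. For a nonnegative integer n define ψₙ(x) = (λ₀²x²)^{a/4}·exp( -(λ₀²x²)^{a+1}/(2(a+1)) )·Heₙ(√2·ξ(x)), where Heₙ is the probabilist's Hermite polynomial (so Heₙ(√2 u) is proportional to the physicist's Hermite polynomial Hₙ(u)). Then for every x ≠ 0: ψₙ''(x) - (2a/x)·ψₙ'(x) + [ a(3a+2)/(4x²) + κₙ²λ₀^{2a}|x|^{2a} - λ₀^{4a+4}|x|^{4a}x² ]·ψₙ(x) = 0, where κₙ² = λ₀²·(a+1)·(2n+1); equivalently ψₙ is a solution of the Schrödinger equation with energy Eₙ = ħ²κₙ²/(2m₀) = (a+1)·ħω·(n + 1/2). -/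

import Mathlib

open Polynomial

/-- The point canonical transformation `ξ(x) = λ₀^(a+1)·(a+1)^(-1/2)·|x|^a·x`. -/
noncomputable def xiPCT (lam a : ℝ) (x : ℝ) : ℝ :=
  lam ^ (a + 1) * (a + 1) ^ (-(1 : ℝ) / 2) * (|x| ^ a * x)

/-- The stationary-state wavefunction
`ψₙ(x) = (λ₀²x²)^(a/4)·exp(-(λ₀²x²)^(a+1)/(2(a+1)))·Heₙ(√2·ξ(x))`,
where `Heₙ` is the probabilist's Hermite polynomial. -/
noncomputable def psiHO (lam a : ℝ) (n : ℕ) (x : ℝ) : ℝ :=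
  (lam ^ 2 * x ^ 2) ^ (a / 4) * Real.exp (-((lam ^ 2 * x ^ 2) ^ (a + 1)) / (2 * (a + 1)))
    * Polynomial.aeval (Real.sqrt 2 * xiPCT lam a x) (Polynomial.hermite n)

lemma herm_deriv (n : ℕ) : derivative (hermite (n+1)) = (n+1 : ℤ[X]) * hermite n := by
  induction n with
  | zero => simp [hermite_one, hermite_zero]
  | succ n ih =>
    have hd : derivative (hermite n) = X * hermite n - hermite (n+1) := by
      rw [hermite_succ n]; ring
    have hc : derivative ((n:ℤ[X]) + 1) = 0 := by simp
    rw [hermite_succ (n+1), derivative_sub, derivative_mul, derivative_X, one_mul, ih,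
      derivative_mul, hc, hd, hermite_succ n]
    push_cast
    ring

lemma herm_ode (n : ℕ) : derivative (derivative (hermite n)) =
    X * derivative (hermite n) - (n : ℤ[X]) * hermite n := by
  cases n with
  | zero => simp [hermite_zero]
  | succ n =>
    have hd : derivative (hermite n) = X * hermite n - hermite (n+1) := by
      rw [hermite_succ n]; ring
    have hc : derivative ((n:ℤ[X]) + 1) = 0 := by simp
    rw [herm_deriv n, derivative_mul, hc, hd]
    push_cast
    ring

lemma abs_rpow_eq (a x : ℝ) : |x| ^ a = (x^2) ^ (a/2) := by
  rw [show (x:ℝ)^2 = |x|^2 from (sq_abs x).symm, ← Real.rpow_natCast |x| 2,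
    ← Real.rpow_mul (abs_nonneg x)]
  norm_num
  rw [show (2:ℝ)*(a/2) = a by ring]

lemma hD0 (b : ℝ) {x : ℝ} (hx : x ≠ 0) :
    HasDerivAt (fun y : ℝ => (y^2)^b) (2*b*(x^2)^b/x) x := by
  have hx2 : (0:ℝ) < x^2 := by positivity
  have h0 : HasDerivAt (fun y : ℝ => y^2) (2*x) x := by
    simpa using hasDerivAt_pow 2 x
  convert h0.rpow_const (p := b) (Or.inl hx2.ne') using 1
  rw [show (x^2)^(b-1) = (x^2)^b/(x^2) by rw [Real.rpow_sub hx2, Real.rpow_one]]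
  field_simp

lemma hD1 (lam b : ℝ) (hL : 0 < lam) {x : ℝ} (hx : x ≠ 0) :
    HasDerivAt (fun y : ℝ => (lam^2*y^2)^b) (2*b*(lam^2*x^2)^b/x) x := by
  have hcx : (0:ℝ) < lam^2*x^2 := by positivity
  have h0 : HasDerivAt (fun y : ℝ => lam^2*y^2) (lam^2*(2*x)) x := by
    have := (hasDerivAt_pow 2 x).const_mul (lam^2)
    refine (this).congr_deriv ?_
    norm_num
  convert h0.rpow_const (p := b) (Or.inl hcx.ne') using 1
  rw [show (lam^2*x^2)^(b-1) = (lam^2*x^2)^b/(lam^2*x^2) by rw [Real.rpow_sub hcx, Real.rpow_one]]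
  field_simp

lemma hDW (lam a : ℝ) (hL : 0 < lam) {x : ℝ} (hx : x ≠ 0) :
    HasDerivAt (fun y : ℝ => (lam^2*y^2)^(a/4)) (a/(2*x)*(lam^2*x^2)^(a/4)) x := by
  convert hD1 lam (a/4) hL hx using 1
  ring

lemma hDE (lam a : ℝ) (hL : 0 < lam) (ha1 : 0 < a + 1) {x : ℝ} (hx : x ≠ 0) :
    HasDerivAt (fun y : ℝ => Real.exp (-((lam^2*y^2)^(a+1)) / (2*(a+1))))
      (-((lam^2*x^2)^a*lam^2*x) * Real.exp (-((lam^2*x^2)^(a+1)) / (2*(a+1)))) x := by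
  have hcx : (0:ℝ) < lam^2*x^2 := by positivity
  have h0 := ((hD1 lam (a+1) hL hx).neg).div_const (2*(a+1))
  have h := h0.exp
  refine (h).congr_deriv ?_
  simp only [Pi.neg_apply]
  rw [show (lam^2*x^2)^(a+1) = (lam^2*x^2)^a*(lam^2*x^2) by
    rw [Real.rpow_add_one hcx.ne' a]]
  field_simp

lemma hDxi (lam a : ℝ) {x : ℝ} (hx : x ≠ 0) :
    HasDerivAt (xiPCT lam a) ((a+1) * xiPCT lam a x / x) x := by
  have h0 : HasDerivAt (fun y : ℝ => (y^2)^(a/2)*y) ((a+1)*(x^2)^(a/2)) x := by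
    have h1 := (hD0 (a/2) hx).mul (hasDerivAt_id x)
    refine (h1).congr_deriv ?_
    simp only [id_eq]
    field_simp
  have h2 := h0.const_mul (lam^(a+1)*(a+1)^(-(1:ℝ)/2))
  have hfun : (fun y : ℝ => lam^(a+1)*(a+1)^(-(1:ℝ)/2)*((y^2)^(a/2)*y)) = xiPCT lam a := by
    funext y
    simp only [xiPCT, abs_rpow_eq]
  have h3 : HasDerivAt (xiPCT lam a)
      (lam^(a+1)*(a+1)^(-(1:ℝ)/2)*((a+1)*(x^2)^(a/2))) x := hfun ▸ h2
  convert h3 using 1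
  simp only [xiPCT, abs_rpow_eq]
  field_simp

lemma hDT (lam a : ℝ) {x : ℝ} (hx : x ≠ 0) :
    HasDerivAt (fun y : ℝ => Real.sqrt 2 * xiPCT lam a y)
      ((a+1)*(Real.sqrt 2 * xiPCT lam a x)/x) x := by
  refine ((hDxi lam a hx).const_mul (Real.sqrt 2)).congr_deriv ?_
  ring

lemma hDH (lam a : ℝ) (p : ℤ[X]) {x : ℝ} (hx : x ≠ 0) :
    HasDerivAt (fun y : ℝ => (Polynomial.aeval (Real.sqrt 2 * xiPCT lam a y) p : ℝ))
      ((Polynomial.aeval (Real.sqrt 2 * xiPCT lam a x) (derivative p) : ℝ)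
        * ((a+1)*(Real.sqrt 2 * xiPCT lam a x)/x)) x := by
  exact (Polynomial.hasDerivAt_aeval (𝕜 := ℝ) (Real.sqrt 2 * xiPCT lam a x) (q := p)).comp
    x (hDT lam a hx)

lemma hDQ (lam a : ℝ) {x : ℝ} (hx : x ≠ 0) :
    HasDerivAt (fun y : ℝ => (a+1)*(Real.sqrt 2 * xiPCT lam a y)/y)
      (a*(a+1)*(Real.sqrt 2 * xiPCT lam a x)/x^2) x := by
  have h := ((hDT lam a hx).const_mul (a+1)).div (hasDerivAt_id x) hx
  refine (h).congr_deriv ?_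
  simp only [id_eq]
  field_simp
  ring

set_option maxHeartbeats 4000000 in
/-- `ψₙ` solves the Schrödinger equation of the deformed oscillator with
`κₙ² = λ₀²(a+1)(2n+1)`; equivalently, the energy is `Eₙ = ħ²κₙ²/(2m₀) = (a+1)ħω(n+1/2)`. -/
theorem stmt8 (m₀ ω hbar a : ℝ) (hm₀ : 0 < m₀) (hω : 0 < ω) (hhb : 0 < hbar) (ha : -1 < a)
    (lam : ℝ) (hlam : lam = Real.sqrt (m₀ * ω / hbar)) (n : ℕ) :
    (∀ x : ℝ, x ≠ 0 →
      deriv (deriv (psiHO lam a n)) x - (2 * a / x) * deriv (psiHO lam a n) x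
        + (a * (3 * a + 2) / (4 * x ^ 2)
            + (lam ^ 2 * (a + 1) * (2 * (n : ℝ) + 1)) * lam ^ (2 * a) * |x| ^ (2 * a)
            - lam ^ (4 * a + 4) * |x| ^ (4 * a) * x ^ 2) * psiHO lam a n x = 0) ∧
    hbar ^ 2 * (lam ^ 2 * (a + 1) * (2 * (n : ℝ) + 1)) / (2 * m₀)
      = (a + 1) * hbar * ω * ((n : ℝ) + 1 / 2) := by
  have hL : 0 < lam := by
    rw [hlam]
    exact Real.sqrt_pos.mpr (by positivity)
  have ha1 : (0:ℝ) < a + 1 := by linarith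
  constructor
  · intro x hx
    have hx2 : (0:ℝ) < x^2 := by positivity
    have hlx2 : (0:ℝ) < lam^2*x^2 := by positivity
    set F : ℝ → ℝ := fun y =>
      a/(2*y) * ((lam^2*y^2)^(a/4) * Real.exp (-((lam^2*y^2)^(a+1)) / (2*(a+1)))
          * (Polynomial.aeval (Real.sqrt 2 * xiPCT lam a y) (hermite n) : ℝ))
      - (lam^2*y^2)^a*lam^2*y * ((lam^2*y^2)^(a/4) * Real.exp (-((lam^2*y^2)^(a+1)) / (2*(a+1)))
          * (Polynomial.aeval (Real.sqrt 2 * xiPCT lam a y) (hermite n) : ℝ))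
      + (lam^2*y^2)^(a/4) * Real.exp (-((lam^2*y^2)^(a+1)) / (2*(a+1)))
          * ((Polynomial.aeval (Real.sqrt 2 * xiPCT lam a y) (derivative (hermite n)) : ℝ)
            * ((a+1)*(Real.sqrt 2 * xiPCT lam a y)/y)) with hFdef
    have hder : ∀ y : ℝ, y ≠ 0 → HasDerivAt (psiHO lam a n) (F y) y := by
      intro y hy
      have hb : psiHO lam a n = fun z : ℝ => (lam^2*z^2)^(a/4)
          * Real.exp (-((lam^2*z^2)^(a+1)) / (2*(a+1)))
          * (Polynomial.aeval (Real.sqrt 2 * xiPCT lam a z) (hermite n) : ℝ) := rfl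
      rw [hb, hFdef]
      have h := ((hDW lam a hL hy).mul (hDE lam a hL ha1 hy)).mul (hDH lam a (hermite n) hy)
      refine (h).congr_deriv ?_
      simp only [Pi.mul_apply]
      ring
    have hd1 : deriv (psiHO lam a n) x = F x := (hder x hx).deriv
    have hev : deriv (psiHO lam a n) =ᶠ[nhds x] F :=
      Filter.eventuallyEq_of_mem (compl_singleton_mem_nhds hx) (fun y hy => (hder y hy).deriv)
    have hψ' : HasDerivAt (fun z : ℝ => (lam^2*z^2)^(a/4)
        * Real.exp (-((lam^2*z^2)^(a+1)) / (2*(a+1)))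
        * (Polynomial.aeval (Real.sqrt 2 * xiPCT lam a z) (hermite n) : ℝ)) (F x) x :=
      hder x hx
    have h1 : HasDerivAt (fun y : ℝ => a/(2*y)) (-(a/(2*x^2))) x := by
      have he : (fun y : ℝ => a/(2*y)) = fun y => (a/2) * y⁻¹ := by funext y; ring
      rw [he]
      refine ((hasDerivAt_inv hx).const_mul (a/2)).congr_deriv ?_
      field_simp
    have hg : HasDerivAt (fun y : ℝ => (lam^2*y^2)^a*lam^2*y)
        (2*a*(lam^2*x^2)^a*lam^2 + (lam^2*x^2)^a*lam^2) x := by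
      have h := ((hD1 lam a hL hx).mul_const (lam^2)).mul (hasDerivAt_id x)
      refine (h).congr_deriv ?_
      simp only [id_eq]
      field_simp
    have hWE := (hDW lam a hL hx).mul (hDE lam a hL ha1 hx)
    have hH1Q := (hDH lam a (derivative (hermite n)) hx).mul (hDQ lam a hx)
    have hF' := ((h1.mul hψ').sub (hg.mul hψ')).add (hWE.mul hH1Q)
    have hF2 : HasDerivAt F (-(a / (2 * x ^ 2)) * ((lam ^ 2 * x ^ 2) ^ (a / 4) *
          Real.exp (-(lam ^ 2 * x ^ 2) ^ (a + 1) / (2 * (a + 1))) *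
          (Polynomial.aeval (Real.sqrt 2 * xiPCT lam a x)) (hermite n)) +
        a / (2 * x) * F x -
        (2 * a * (lam ^ 2 * x ^ 2) ^ a * lam ^ 2 + (lam ^ 2 * x ^ 2) ^ a * lam ^ 2) *
          ((lam ^ 2 * x ^ 2) ^ (a / 4) *
            Real.exp (-(lam ^ 2 * x ^ 2) ^ (a + 1) / (2 * (a + 1))) *
            (Polynomial.aeval (Real.sqrt 2 * xiPCT lam a x)) (hermite n)) -
        (lam ^ 2 * x ^ 2) ^ a * lam ^ 2 * x * F x +
        ((a / (2 * x) * (lam ^ 2 * x ^ 2) ^ (a / 4) *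
            Real.exp (-(lam ^ 2 * x ^ 2) ^ (a + 1) / (2 * (a + 1))) +
          (lam ^ 2 * x ^ 2) ^ (a / 4) *
            (-((lam ^ 2 * x ^ 2) ^ a * lam ^ 2 * x) *
              Real.exp (-(lam ^ 2 * x ^ 2) ^ (a + 1) / (2 * (a + 1))))) *
          ((Polynomial.aeval (Real.sqrt 2 * xiPCT lam a x)) (derivative (hermite n)) *
            ((a + 1) * (Real.sqrt 2 * xiPCT lam a x) / x)) +
        (lam ^ 2 * x ^ 2) ^ (a / 4) *
            Real.exp (-(lam ^ 2 * x ^ 2) ^ (a + 1) / (2 * (a + 1))) *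
          ((Polynomial.aeval (Real.sqrt 2 * xiPCT lam a x)) (derivative (derivative (hermite n))) *
              ((a + 1) * (Real.sqrt 2 * xiPCT lam a x) / x) *
              ((a + 1) * (Real.sqrt 2 * xiPCT lam a x) / x) +
            (Polynomial.aeval (Real.sqrt 2 * xiPCT lam a x)) (derivative (hermite n)) *
              (a * (a + 1) * (Real.sqrt 2 * xiPCT lam a x) / x ^ 2)))) x := by
      rw [hFdef]
      refine (hF').congr_deriv ?_
      simp only [Pi.mul_apply]
      ring
    rw [hev.deriv_eq, hF2.deriv, hd1]
    simp only [hFdef, psiHO]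
    have h2nn : (0:ℝ) ≤ x^2 := hx2.le
    have hlnn : (0:ℝ) ≤ lam^2 := sq_nonneg lam
    have hxp : ((x^2)^(a/4))^(4:ℕ) = (x^2)^a := by
      rw [← Real.rpow_natCast ((x^2)^(a/4)) 4, ← Real.rpow_mul h2nn,
        show (a/4*((4:ℕ):ℝ)) = a by push_cast; ring]
    have hlp : (lam^(a/2))^(4:ℕ) = lam^(2*a) := by
      rw [← Real.rpow_natCast (lam^(a/2)) 4, ← Real.rpow_mul hL.le,
        show (a/2*((4:ℕ):ℝ)) = 2*a by push_cast; ring]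
    have hw : (lam^2*x^2)^(a/4) = lam^(a/2)*(x^2)^(a/4) := by
      rw [Real.mul_rpow hlnn h2nn, ← Real.rpow_natCast lam 2, ← Real.rpow_mul hL.le,
        show (((2:ℕ):ℝ)*(a/4)) = a/2 by push_cast; ring]
    have hu4 : (lam^2*x^2)^a = (lam^(a/2))^4*((x^2)^(a/4))^4 := by
      rw [hxp, hlp, Real.mul_rpow hlnn h2nn, ← Real.rpow_natCast lam 2, ← Real.rpow_mul hL.le,
        show (((2:ℕ):ℝ)*a) = 2*a by push_cast; ring]
    have hax2 : |x|^(2*a) = ((x^2)^(a/4))^4 := by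
      rw [hxp, abs_rpow_eq (2*a) x, show (2*a)/2 = a by ring]
    have hax4 : |x|^(4*a) = ((x^2)^(a/4))^4*((x^2)^(a/4))^4 := by
      rw [hxp, abs_rpow_eq (4*a) x, show (4*a)/2 = a + a by ring, Real.rpow_add hx2]
    have hl4 : lam^(4*a+4) = (lam^(a/2))^4*((lam^(a/2))^4*lam^4) := by
      rw [hlp, show (4*a+4:ℝ) = 2*a+(2*a+((4:ℕ):ℝ)) by push_cast; ring, Real.rpow_add hL,
        Real.rpow_add hL, Real.rpow_natCast]
    have hl2 : lam^(2*a) = (lam^(a/2))^4 := hlp.symm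
    have hmne : (lam:ℝ)^(a/2) ≠ 0 := (Real.rpow_pos_of_pos hL (a/2)).ne'
    have e1 : (lam^(a+1))^(2:ℕ) = (lam^(a/2))^4*lam^2 := by
      rw [hlp, ← Real.rpow_natCast (lam^(a+1)) 2, ← Real.rpow_mul hL.le,
        show ((a+1)*((2:ℕ):ℝ)) = 2*a + ((2:ℕ):ℝ) by push_cast; ring, Real.rpow_add hL,
        Real.rpow_natCast]
    have e2 : ((a+1)^(-(1:ℝ)/2))^(2:ℕ) = (a+1)⁻¹ := by
      rw [← Real.rpow_natCast ((a+1)^(-(1:ℝ)/2)) 2, ← Real.rpow_mul ha1.le,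
        show (-(1:ℝ)/2*((2:ℕ):ℝ)) = -1 by push_cast; ring, Real.rpow_neg_one]
    have e3 : (|x|^a)^(2:ℕ) = ((x^2)^(a/4))^4 := by
      rw [hxp, ← Real.rpow_natCast (|x|^a) 2, ← Real.rpow_mul (abs_nonneg x),
        abs_rpow_eq (a*((2:ℕ):ℝ)) x, show (a*((2:ℕ):ℝ))/2 = a by push_cast; ring]
    have ht2 : (Real.sqrt 2*xiPCT lam a x)^2
        = 2*((lam^(a/2))^4*lam^2*(((x^2)^(a/4))^4*(x^2*(a+1)⁻¹))) := by
      simp only [xiPCT, mul_pow]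
      rw [Real.sq_sqrt (by norm_num : (0:ℝ) ≤ 2), e1, e2, e3]
      ring
    have hv4 : ((x^2)^(a/4))^4
        = (a+1)*(Real.sqrt 2*xiPCT lam a x)^2/(2*((lam^(a/2))^4*lam^2*x^2)) := by
      rw [ht2]
      field_simp
    have hr : (Polynomial.aeval (Real.sqrt 2*xiPCT lam a x) (derivative (derivative (hermite n))) : ℝ)
        = (Real.sqrt 2*xiPCT lam a x)
            * Polynomial.aeval (Real.sqrt 2*xiPCT lam a x) (derivative (hermite n))
          - (n:ℝ) * Polynomial.aeval (Real.sqrt 2*xiPCT lam a x) (hermite n) := by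
      rw [herm_ode n]
      simp
    rw [hr, hw, hu4, hax2, hax4, hl2, hl4, hv4]
    field_simp [hx, ha1.ne', hmne, hL.ne']
    ring
  · have hlam2 : lam^2 = m₀*ω/hbar := by
      rw [hlam, Real.sq_sqrt (by positivity)]
    rw [hlam2]
    field_simp
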